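/- In the bounded-treewidth dynamic program for maximum-ink SPED, for a forget node t with child t' where X_t = X_{t'} \ {v}, and any valid stub set S ⊆ S(X_t), the table entry satisfies W(t, S) = max{ W(t', S ∪ {(v, ℓ_i(v))}) : i = 0, ..., δ_v }. -/
import Mathlib


open scoped Classical

/-- The stub pairs `(u, ℓ)` with `u ∈ A` and `ℓ` a candidate stub length of `u`. -/
noncomputable def stubPairs {V : Type*} (cand : V → Finset ℝ) (A : Finset V) :
    Finset (V × ℝ) :=
  A.biUnion fun u => (cand u).image fun l => (u, l)

/-- A stub set over the vertex set `A` is valid if it contains exactly one candidate stub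
pair per vertex of `A` and no two of its pairs intersect. -/
def ValidStubSet {V : Type*} (cand : V → Finset ℝ) (meets : V → ℝ → V → ℝ → Prop)
    (A : Finset V) (S : Finset (V × ℝ)) : Prop :=
  S ⊆ stubPairs cand A ∧ (∀ u ∈ A, ∃! l : ℝ, (u, l) ∈ S) ∧
  ∀ p ∈ S, ∀ q ∈ S, p.1 ≠ q.1 → ¬ meets p.1 p.2 q.1 q.2

/-- The ink of a stub set: the total stub length. -/
noncomputable def inkOf {V : Type*} (S : Finset (V × ℝ)) : ℝ := ∑ p ∈ S, p.2

/-- The dynamic-programming table: `Wtab cand meets X Vt S` is the maximum ink of a valid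
stub set `T` on `Vt` with `S ⊆ T` and `T ∩ S(X) = S` (and `⊥ = -∞` if none exists). -/
noncomputable def Wtab {V : Type*} (cand : V → Finset ℝ)
    (meets : V → ℝ → V → ℝ → Prop) (X Vt : Finset V) (S : Finset (V × ℝ)) : EReal :=
  sSup {x : EReal | ∃ T : Finset (V × ℝ), ValidStubSet cand meets Vt T ∧
    S ⊆ T ∧ T ∩ stubPairs cand X = S ∧ x = (inkOf T : EReal)}


lemma mem_stubPairs {V : Type*} (cand : V → Finset ℝ) (A : Finset V) (u : V) (l : ℝ) :
    (u, l) ∈ stubPairs cand A ↔ u ∈ A ∧ l ∈ cand u := by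
  simp only [stubPairs, Finset.mem_biUnion, Finset.mem_image, Prod.mk.injEq]
  constructor
  · rintro ⟨a, ha, b, hb, rfl, rfl⟩; exact ⟨ha, hb⟩
  · rintro ⟨ha, hb⟩; exact ⟨u, ha, l, hb, rfl, rfl⟩

/-- the forget-node recurrence of the bounded-treewidth DP for MaxSPED.
At a forget node `t` with child `t'`, `X_t = X_{t'} \ {v}` and `V_t = V_{t'}`.  For any
valid stub set `S ⊆ S(X_t)`,
`W(t, S) = max { W(t', S ∪ {(v, ℓ)}) : ℓ a candidate stub length of v }`. -/
theorem stmt_9 {V : Type*} (cand : V → Finset ℝ)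
    (meets : V → ℝ → V → ℝ → Prop)
    (meets_symm : ∀ u a w b, meets u a w b → meets w b u a)
    (Xt' Vt' : Finset V) (hXV : Xt' ⊆ Vt')
    (v : V) (hv : v ∈ Xt')
    (Xt Vt : Finset V) (hXt : Xt = Xt'.erase v) (hVt : Vt = Vt')
    (S : Finset (V × ℝ)) (hS : ValidStubSet cand meets Xt S) :
    Wtab cand meets Xt Vt S =
      sSup {x : EReal | ∃ l ∈ cand v, x = Wtab cand meets Xt' Vt' (insert (v, l) S)} := by
  subst hXt hVt
  apply le_antisymm
  · apply sSup_le
    rintro x ⟨T, hTvalid, hST, hTXt, rfl⟩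
    obtain ⟨hTsub, hex, hmeet⟩ := hTvalid
    obtain ⟨l, hl, hluniq⟩ := hex v (hXV hv)
    have hlc : l ∈ cand v := ((mem_stubPairs cand _ v l).1 (hTsub hl)).2
    have hS'T : insert (v, l) S ⊆ T := Finset.insert_subset hl hST
    have hkey : T ∩ stubPairs cand Xt' = insert (v, l) S := by
      ext ⟨u, m⟩
      simp only [Finset.mem_inter, mem_stubPairs, Finset.mem_insert, Prod.mk.injEq]
      constructor
      · rintro ⟨hT, hu, hm⟩
        by_cases huv : u = v
        · subst huv
          exact Or.inl ⟨rfl, hluniq m hT⟩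
        · right
          rw [← hTXt]
          exact Finset.mem_inter.2 ⟨hT,
            (mem_stubPairs cand _ u m).2 ⟨Finset.mem_erase.2 ⟨huv, hu⟩, hm⟩⟩
      · rintro (⟨rfl, rfl⟩ | hSm)
        · exact ⟨hl, hv, hlc⟩
        · refine ⟨hST hSm, ?_⟩
          have := (mem_stubPairs cand _ u m).1 (hS.1 hSm)
          exact ⟨Finset.mem_of_mem_erase this.1, this.2⟩
    calc (inkOf T : EReal) ≤ Wtab cand meets Xt' _ (insert (v, l) S) :=
          le_sSup ⟨T, ⟨hTsub, hex, hmeet⟩, hS'T, hkey, rfl⟩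
      _ ≤ _ := le_sSup (show ∃ l' ∈ cand v,
          Wtab cand meets Xt' _ (insert (v, l) S) =
            Wtab cand meets Xt' _ (insert (v, l') S) from ⟨l, hlc, rfl⟩)
  · apply sSup_le
    rintro x ⟨l, hl, rfl⟩
    apply sSup_le
    rintro y ⟨T, hTvalid, hS'T, hTXt', rfl⟩
    apply le_sSup
    refine ⟨T, hTvalid, (Finset.subset_insert _ _).trans hS'T, ?_, rfl⟩
    ext ⟨u, m⟩
    simp only [Finset.mem_inter, mem_stubPairs]
    constructor
    · rintro ⟨hT, hu, hm⟩
      have hmem : (u, m) ∈ insert (v, l) S := by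
        rw [← hTXt']
        exact Finset.mem_inter.2 ⟨hT,
          (mem_stubPairs cand _ u m).2 ⟨Finset.mem_of_mem_erase hu, hm⟩⟩
      rcases Finset.mem_insert.1 hmem with h | h
      · exact absurd (congrArg Prod.fst h) (Finset.mem_erase.1 hu).1
      · exact h
    · intro hSm
      refine ⟨hS'T (Finset.mem_insert_of_mem hSm), ?_⟩
      exact (mem_stubPairs cand _ u m).1 (hS.1 hSm)
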